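/- The invariant measure of the octagon Gauss map is finite: μ_G(ℝ) < ∞, i.e. the density g is Lebesgue-integrable over ℝ. -/

import Mathlib

open MeasureTheory Set

noncomputable section

/-- The density `g` of the invariant measure of the octagon Gauss map:
`g(u) = 1/(1+√2-u) - 1/(3+3√2-u)` for `u ≤ -1-√2`, `g(u) = 1/(1+√2-u)` for
`-1-√2 < u ≤ 1`, `g(u) = 1/(1+2√2-u)` for `1 < u < 1+√2`, and `g(u) = 0` for
`u ≥ 1+√2`. -/
def gdens (u : ℝ) : ℝ :=
  if u ≤ -(1 + Real.sqrt 2) then (1 + Real.sqrt 2 - u)⁻¹ - (3 + 3 * Real.sqrt 2 - u)⁻¹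
  else if u ≤ 1 then (1 + Real.sqrt 2 - u)⁻¹
  else if u < 1 + Real.sqrt 2 then (1 + 2 * Real.sqrt 2 - u)⁻¹
  else 0

/-- The measure `μ_G` with density `g`. -/
def gaussMeasure : Measure ℝ :=
  volume.withDensity fun u => ENNReal.ofReal (gdens u)

lemma gdens_measurable : Measurable gdens := by
  unfold gdens
  refine Measurable.ite (measurableSet_le measurable_id measurable_const)
    (by fun_prop) (Measurable.ite (measurableSet_le measurable_id measurable_const)
    (by fun_prop) (Measurable.ite (measurableSet_lt measurable_id measurable_const)
    (by fun_prop) measurable_const))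

lemma gdens_bound (u : ℝ) : ‖gdens u‖ ≤ 100 * (1 / (1 + u ^ 2)) := by
  have hs : Real.sqrt 2 ^ 2 = 2 := Real.sq_sqrt (by norm_num)
  have hs1 : 1 < Real.sqrt 2 := by nlinarith [Real.sqrt_nonneg 2]
  have hs2 : Real.sqrt 2 < 2 := by nlinarith [Real.sqrt_nonneg 2]
  set s := Real.sqrt 2 with hsdef
  have hu2 : (0:ℝ) < 1 + u ^ 2 := by positivity
  have hnn : 0 ≤ gdens u := by
    unfold gdens
    split_ifs with h1 h2 h3
    · have hA : (0:ℝ) < 1 + s - u := by nlinarith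
      have hB : (0:ℝ) < 3 + 3 * s - u := by nlinarith
      have : (3 + 3 * s - u)⁻¹ ≤ (1 + s - u)⁻¹ := by
        apply inv_anti₀ hA; nlinarith
      linarith
    · have hA : (0:ℝ) < 1 + s - u := by nlinarith
      positivity
    · have hA : (0:ℝ) < 1 + 2 * s - u := by nlinarith
      positivity
    · exact le_refl _
  have hub : gdens u ≤ 100 * (1 / (1 + u ^ 2)) := by
    rw [mul_one_div]
    unfold gdens
    split_ifs with h1 h2 h3
    · have hA : (0:ℝ) < 1 + s - u := by nlinarith
      have hB : (0:ℝ) < 3 + 3 * s - u := by nlinarith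
      have heq : (1 + s - u)⁻¹ - (3 + 3 * s - u)⁻¹
          = (2 + 2 * s) / ((1 + s - u) * (3 + 3 * s - u)) := by
        rw [inv_sub_inv hA.ne' hB.ne']
        ring
      rw [heq, div_le_div_iff₀ (by positivity) hu2]
      nlinarith [sq_nonneg (u + 1 + s), sq_nonneg u, sq_nonneg (u * s)]
    · have hA : (0:ℝ) < 1 + s - u := by nlinarith
      rw [inv_eq_one_div, div_le_div_iff₀ hA hu2]
      nlinarith [mul_nonneg (by linarith : (0:ℝ) ≤ 1 - u) (by nlinarith : (0:ℝ) ≤ u + 3)]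
    · have hA : (0:ℝ) < 1 + 2 * s - u := by nlinarith
      rw [inv_eq_one_div, div_le_div_iff₀ hA hu2]
      nlinarith [mul_nonneg (by nlinarith : (0:ℝ) ≤ 1 + s - u) (by nlinarith : (0:ℝ) ≤ u + 3)]
    · positivity
  rw [Real.norm_eq_abs, abs_of_nonneg hnn]
  exact hub

lemma gdens_integrable : Integrable gdens := by
  have h100 : Integrable (fun u : ℝ => 100 * (1 / (1 + u ^ 2))) := by
    simpa [one_div] using integrable_inv_one_add_sq.const_mul (100:ℝ)
  exact h100.mono' gdens_measurable.aestronglyMeasurable (ae_of_all _ gdens_bound)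

/-- The invariant measure of the octagon Gauss map is finite. -/
theorem gaussMeasure_finite : gaussMeasure Set.univ < ⊤ := by
  rw [gaussMeasure, withDensity_apply _ MeasurableSet.univ, setLIntegral_univ]
  exact gdens_integrable.lintegral_lt_top
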